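/- arXiv:1511.07922 — 5 statements merged into one kernel-verified Lean document; each statement's English description precedes it below -/
import Mathlib

section
/- If T is a desingularized operator for L of order k ≥ r = deg_∂(L), then deg_x(lc_∂(T)) = min{ deg_x(lc_∂(Q)) : Q ∈ M_k(L), Q ≠ 0 }, i.e., among nonzero operators in the contraction ideal of order at most k, T has a leading coefficient of minimal x-degree. -/
open Polynomial

noncomputable section

/-- `Q_R(x)`, the field of rational functions over the fraction field `Q_R` of `R`,
realized as the fraction field of `R[x]`. -/
abbrev QX (R : Type) [CommRing R] [IsDomain R] := FractionRing (Polynomial R)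

/-- Data of an Ore algebra `R[x][∂; σ, δ] ⊆ Q_R(x)[∂; σ, δ]`.
The ring `A` plays the role of `Q_R(x)[∂]`; `ι` embeds the coefficient field,
`D` is the Ore variable `∂`, subject to the commutation rule `∂·p = σ(p)·∂ + δ(p)`,
and every element of `A` has a unique finite coefficient expansion `Σ ι(cᵢ)·∂^i`. -/
structure OreAlg (R : Type) [CommRing R] [IsDomain R] (A : Type) [Ring A] where
  σ : Polynomial R ≃+* Polynomial R
  σ_fix : ∀ r : R, σ (C r) = C r
  δ : Polynomial R → Polynomial R
  δ_add : ∀ f g, δ (f + g) = δ f + δ g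
  δ_linear : ∀ (r : R) (f), δ (C r * f) = C r * δ f
  ι : QX R →+* A
  ι_inj : Function.Injective ι
  D : A
  comm_rule : ∀ p : Polynomial R,
    D * ι (algebraMap (Polynomial R) (QX R) p)
      = ι (algebraMap (Polynomial R) (QX R) (σ p)) * D
        + ι (algebraMap (Polynomial R) (QX R) (δ p))
  δ_leibniz : ∀ f g, δ (f * g) = σ f * δ g + δ f * g
  coeff : A → ℕ → QX R
  coeff_inj : ∀ P Q : A, (∀ i, coeff P i = coeff Q i) → P = Q
  coeff_add : ∀ P Q i, coeff (P + Q) i = coeff P i + coeff Q i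
  coeff_smul : ∀ (f : QX R) (P : A) (i), coeff (ι f * P) i = f * coeff P i
  coeff_bdd : ∀ P : A, ∃ N, ∀ i, N < i → coeff P i = 0
  coeff_mk : ∀ (N : ℕ) (c : ℕ → QX R), (∀ i, N < i → c i = 0) →
    ∀ j, coeff (∑ i ∈ Finset.range (N + 1), ι (c i) * D ^ i) j = c j

namespace OreAlg

variable {R : Type} [CommRing R] [IsDomain R] {A : Type} [Ring A] (O : OreAlg R A)

/-- The embedding of `R[x]` into the Ore algebra. -/
def ιp (f : Polynomial R) : A := O.ι (algebraMap (Polynomial R) (QX R) f)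

/-- The `i`-th `∂`-coefficient of `P` lies in `R[x]`. -/
def PolyCoeff (P : A) (i : ℕ) : Prop :=
  ∃ f : Polynomial R, O.coeff P i = algebraMap (Polynomial R) (QX R) f

/-- `P` belongs to the subring `R[x][∂]` of `Q_R(x)[∂]`. -/
def InB (P : A) : Prop := ∀ i, O.PolyCoeff P i

/-- The order (degree in `∂`) of an operator. -/
def ord (P : A) : ℕ := sSup {i | O.coeff P i ≠ 0}

/-- The leading coefficient (with respect to `∂`), in `Q_R(x)`. -/
def lc (P : A) : QX R := O.coeff P (O.ord P)

/-- The contraction ideal `cont(L) = Q_R(x)[∂]·L ∩ R[x][∂]`. -/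
def cont (L : A) : Set A := {P | O.InB P ∧ ∃ Q : A, P = Q * L}

/-- The `k`-th submodule `M_k(L) = {P ∈ cont(L) : deg_∂ P ≤ k}`. -/
def M (L : A) (k : ℕ) : Set A := {P | P ∈ O.cont L ∧ O.ord P ≤ k}

/-- The `k`-th coefficient ideal `I_k = {[∂^k]P : P ∈ M_k} ∪ {0}` (as a set of
polynomials; `0` arises from `P = 0`). -/
def Icoeff (L : A) (k : ℕ) : Set (Polynomial R) :=
  {f | ∃ P ∈ O.M L k, O.coeff P k = algebraMap (Polynomial R) (QX R) f}

end OreAlg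

/-- `gcd(p, w) = 1` in `R[x]`: every common divisor is a unit. -/
def Copr {R : Type} [CommRing R] (p w : Polynomial R) : Prop :=
  ∀ d : Polynomial R, d ∣ p → d ∣ w → IsUnit d

namespace OreAlg

variable {R : Type} [CommRing R] [IsDomain R] {A : Type} [Ring A] (O : OreAlg R A)

/-- `P` is a `p`-removing operator for `L` over `R[x]`, of order `k`:
`P·L ∈ R[x][∂]` and `σ^{-k}(lc_∂(P·L)) = (w/(v·p))·lc_∂(L)` with `gcd(p, w) = 1`. -/
def IsRemoving (L : A) (p : Polynomial R) (k : ℕ) (P : A) : Prop :=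
  O.ord P = k ∧ O.InB (P * L) ∧
  ∃ w v t l : Polynomial R, v ≠ 0 ∧ Copr p w ∧
    O.lc (P * L) = algebraMap (Polynomial R) (QX R) t ∧
    O.lc L = algebraMap (Polynomial R) (QX R) l ∧
    (⇑O.σ.symm)^[k] t * (v * p) = w * l

/-- `p` is removable from `L` (at some order). -/
def Removable (L : A) (p : Polynomial R) : Prop :=
  ∃ k P, O.IsRemoving L p k P

/-- Factorization data for `lc_∂(L) = c·p₁^{e₁}⋯p_m^{e_m}`, with `c ∈ R` and the
`pᵢ ∈ R[x] \ R` irreducible and pairwise coprime; `L` has order `r > 0`. -/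
def Factored (L : A) (r m : ℕ) (c : R) (p : Fin m → Polynomial R)
    (e : Fin m → ℕ) : Prop :=
  O.ord L = r ∧ 0 < r ∧ c ≠ 0 ∧
  O.lc L = algebraMap (Polynomial R) (QX R) (C c * ∏ i, p i ^ e i) ∧
  (∀ i, Irreducible (p i) ∧ 0 < (p i).natDegree) ∧
  (∀ i j, i ≠ j → Copr (p i) (p j))

/-- `T` is a desingularized operator for `L`: `T ∈ cont(L)` and
`σ^{r-k}(lc_∂(T)) = (a/(b·∏ pᵢ^{kᵢ}))·lc_∂(L)` with `a, b ∈ R`, where each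
`pᵢ^{dᵢ}` with `dᵢ > kᵢ` is non-removable from `L`. -/
def Desing (L : A) (r m : ℕ) (c : R) (p : Fin m → Polynomial R)
    (e : Fin m → ℕ) (T : A) : Prop :=
  T ∈ O.cont L ∧ r ≤ O.ord T ∧
  ∃ (a b : R) (k : Fin m → ℕ) (t l : Polynomial R),
    b ≠ 0 ∧ (∀ i, k i ≤ e i) ∧
    O.lc T = algebraMap (Polynomial R) (QX R) t ∧
    O.lc L = algebraMap (Polynomial R) (QX R) l ∧
    (⇑O.σ.symm)^[O.ord T - r] t * (C b * ∏ i, p i ^ k i) = C a * l ∧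
    (∀ i (d : ℕ), k i < d → ¬ O.Removable L (p i ^ d))

/-- The left ideal of `R[x][∂]` generated by a set `S ⊆ R[x][∂]`. -/
def LIdeal (S : Set A) : Set A :=
  {P | ∃ (n : ℕ) (co s : Fin n → A), (∀ i, O.InB (co i)) ∧ (∀ i, s i ∈ S) ∧
    P = ∑ i, co i * s i}

/-- The constant `a ∈ R` viewed inside the Ore algebra. -/
def cst (a : R) : A := O.ιp (C a)

/-- The saturation `I : a^∞ = {P ∈ R[x][∂] : aⁱ·P ∈ I for some i}`. -/
def sat (I : Set A) (a : R) : Set A :=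
  {P | O.InB P ∧ ∃ i : ℕ, O.cst a ^ i * P ∈ I}

end OreAlg

section AuxLemmas

open Polynomial

variable {R : Type} [CommRing R] [IsDomain R]

private lemma equivFixC_comp_eq (eqv : Polynomial R ≃+* Polynomial R)
    (hC : ∀ r : R, eqv (C r) = C r) (f : Polynomial R) :
    eqv f = f.comp (eqv X) := by
  have h : (eqv : Polynomial R →+* Polynomial R) = eval₂RingHom C (eqv X) := by
    apply Polynomial.ringHom_ext
    · intro a
      simp [hC a]
    · simp
  calc eqv f = (eqv : Polynomial R →+* Polynomial R) f := rfl
    _ = (eval₂RingHom C (eqv X)) f := by rw [h]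
    _ = f.comp (eqv X) := rfl

private lemma equivFixC_natDegree (eqv : Polynomial R ≃+* Polynomial R)
    (hC : ∀ r : R, eqv (C r) = C r) (f : Polynomial R) :
    (eqv f).natDegree = f.natDegree := by
  have hX : (eqv X).natDegree = 1 := by
    have h2 : (eqv.symm X).comp (eqv X) = X := by
      rw [← equivFixC_comp_eq eqv hC]
      exact eqv.apply_symm_apply X
    have h3 := congrArg natDegree h2
    rw [natDegree_comp, natDegree_X] at h3
    exact Nat.eq_one_of_mul_eq_one_left h3
  rw [equivFixC_comp_eq eqv hC, natDegree_comp, hX, mul_one]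

private lemma iter_natDegree (eqv : Polynomial R ≃+* Polynomial R)
    (hC : ∀ r : R, eqv (C r) = C r) (n : ℕ) (f : Polynomial R) :
    ((⇑eqv)^[n] f).natDegree = f.natDegree := by
  induction n with
  | zero => rfl
  | succ n ih => rw [Function.iterate_succ_apply', equivFixC_natDegree eqv hC, ih]

private lemma iter_ne_zero (eqv : Polynomial R ≃+* Polynomial R) (n : ℕ)
    {f : Polynomial R} (hf : f ≠ 0) : (⇑eqv)^[n] f ≠ 0 := by
  induction n with
  | zero => exact hf
  | succ n ih =>
    rw [Function.iterate_succ_apply']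
    intro h
    exact ih (eqv.injective (by rw [h, map_zero]))

private lemma prod_pow_dvd {ι : Type} (s : Finset ι) (p : ι → Polynomial R) (n : ι → ℕ)
    (hp : ∀ i, Prime (p i)) (hnd : ∀ i j, i ≠ j → ¬ p i ∣ p j) :
    ∀ q : Polynomial R, (∀ i ∈ s, p i ^ n i ∣ q) → (∏ i ∈ s, p i ^ n i) ∣ q := by
  classical
  induction s using Finset.induction_on with
  | empty => intro q _; simp
  | @insert a s ha ih =>
    intro q hq
    obtain ⟨cc, hcc⟩ := hq a (Finset.mem_insert_self a s)
    have hd : ∀ j ∈ s, p j ^ n j ∣ cc := by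
      intro j hj
      have h1 : p j ^ n j ∣ p a ^ n a * cc := hcc ▸ hq j (Finset.mem_insert_of_mem hj)
      refine (hp j).pow_dvd_of_dvd_mul_left _ ?_ h1
      intro hdvd
      exact hnd j a (fun h => ha (h ▸ hj)) ((hp j).dvd_of_dvd_pow hdvd)
    rw [Finset.prod_insert ha, hcc]
    exact mul_dvd_mul_left _ (ih cc hd)

end AuxLemmas

namespace OreAlg

variable {R : Type} [CommRing R] [IsDomain R] {A : Type} [Ring A] (O : OreAlg R A)

lemma coeff_zero' (i : ℕ) : O.coeff 0 i = 0 := by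
  have h := O.coeff_add 0 0 i
  rw [add_zero] at h
  exact (left_eq_add.mp h)

lemma lc_ne_zero {P : A} (hP : P ≠ 0) : O.lc P ≠ 0 := by
  have hne : {i | O.coeff P i ≠ 0}.Nonempty := by
    by_contra h
    rw [Set.not_nonempty_iff_eq_empty] at h
    have hz : ∀ i, O.coeff P i = 0 := by
      intro i
      by_contra hc
      exact (Set.eq_empty_iff_forall_notMem.mp h i) hc
    exact hP (O.coeff_inj P 0 fun i => by rw [hz i, O.coeff_zero'])
  have hbdd : BddAbove {i | O.coeff P i ≠ 0} := by
    obtain ⟨N, hN⟩ := O.coeff_bdd P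
    exact ⟨N, fun i hi => not_lt.mp fun hlt => hi (hN i hlt)⟩
  simpa [OreAlg.lc, OreAlg.ord] using Nat.sSup_mem hne hbdd

end OreAlg

/-- a desingularized operator `T` of order `k ≥ r` has leading
coefficient of minimal `x`-degree among nonzero operators in `M_k(L)`. -/
theorem desing_minimal_degree {R : Type} [CommRing R] [IsDomain R]
    [IsPrincipalIdealRing R] {A : Type} [Ring A] (O : OreAlg R A)
    (L : A) (hL : L ≠ 0) (hLB : O.InB L)
    (r m : ℕ) (c : R) (p : Fin m → Polynomial R) (e : Fin m → ℕ)
    (hF : O.Factored L r m c p e)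
    (T : A) (hT : O.Desing L r m c p e T) (hT0 : T ≠ 0)
    (k : ℕ) (hk : O.ord T = k) (hkr : r ≤ k)
    (t : Polynomial R) (ht : O.lc T = algebraMap (Polynomial R) (QX R) t) :
    IsLeast {n : ℕ | ∃ Q ∈ O.M L k, Q ≠ 0 ∧
        ∃ q : Polynomial R, O.lc Q = algebraMap (Polynomial R) (QX R) q ∧
          q.natDegree = n}
      t.natDegree := by
  classical
  have hinj : Function.Injective (algebraMap (Polynomial R) (QX R)) :=
    IsFractionRing.injective (Polynomial R) (QX R)
  obtain ⟨hordL, hrpos, hc0, hlcL, hirr, hcop⟩ := hF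
  obtain ⟨hTc, hTr, a, b, kk, tD, lD, hb0, hkle, htD, hlD, heq, hnr⟩ := hT
  set l : Polynomial R := C c * ∏ i, p i ^ e i with hl
  have hpne : ∀ i, p i ≠ 0 := fun i => (hirr i).1.ne_zero
  have hprod_ne : ∀ f : Fin m → ℕ, (∏ i, p i ^ f i) ≠ 0 := fun f =>
    Finset.prod_ne_zero_iff.mpr fun i _ => pow_ne_zero _ (hpne i)
  have hl0 : l ≠ 0 := mul_ne_zero (C_ne_zero.mpr hc0) (hprod_ne e)
  have htD' : tD = t := hinj (htD.symm.trans ht)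
  have hlD' : lD = l := hinj (hlD.symm.trans hlcL)
  rw [htD'] at heq
  rw [hlD'] at heq
  have ht0 : t ≠ 0 := by
    intro h
    apply O.lc_ne_zero hT0
    rw [ht, h, map_zero]
  have hCsymm : ∀ r' : R, O.σ.symm (C r') = C r' := by
    intro r'
    conv_lhs => rw [← O.σ_fix r']
    exact O.σ.symm_apply_apply _
  have ha0 : a ≠ 0 := by
    intro h
    subst h
    rw [C_0, zero_mul] at heq
    exact mul_ne_zero (iter_ne_zero O.σ.symm _ ht0)
      (mul_ne_zero (C_ne_zero.mpr hb0) (hprod_ne kk)) heq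
  have hdeg_t : t.natDegree + ∑ i, kk i * (p i).natDegree = l.natDegree := by
    have hL1 : ((⇑O.σ.symm)^[O.ord T - r] t * (C b * ∏ i, p i ^ kk i)).natDegree
        = t.natDegree + ∑ i, kk i * (p i).natDegree := by
      rw [natDegree_mul (iter_ne_zero O.σ.symm _ ht0)
          (mul_ne_zero (C_ne_zero.mpr hb0) (hprod_ne kk)),
        iter_natDegree O.σ.symm hCsymm, natDegree_C_mul hb0,
        natDegree_prod _ _ (fun i _ => pow_ne_zero _ (hpne i))]
      simp [natDegree_pow]
    rw [heq, natDegree_C_mul ha0] at hL1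
    exact hL1.symm
  have hdegl : l.natDegree = ∑ i, e i * (p i).natDegree := by
    rw [hl, natDegree_C_mul hc0, natDegree_prod _ _ (fun i _ => pow_ne_zero _ (hpne i))]
    simp [natDegree_pow]
  constructor
  · exact ⟨T, ⟨hTc, le_of_eq hk⟩, hT0, t, ht, rfl⟩
  · rintro n ⟨Q, ⟨⟨hQB, S', hQS⟩, hQk⟩, hQ0, q, hq, rfl⟩
    have hq0 : q ≠ 0 := by
      intro h
      apply O.lc_ne_zero hQ0
      rw [hq, h, map_zero]
    set q' : Polynomial R := (⇑O.σ.symm)^[O.ord S'] q with hq'def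
    have hq'0 : q' ≠ 0 := iter_ne_zero O.σ.symm _ hq0
    have hq'deg : q'.natDegree = q.natDegree := iter_natDegree O.σ.symm hCsymm _ q
    set sv : Fin m → ℕ := fun i => Nat.findGreatest (fun s => p i ^ s ∣ q') (e i) with hsv
    have hsd : ∀ i, p i ^ sv i ∣ q' := by
      intro i
      have h0 : (fun s => p i ^ s ∣ q') 0 := by simpa using one_dvd q'
      have hspec := Nat.findGreatest_spec (P := fun s => p i ^ s ∣ q') (Nat.zero_le (e i)) h0
      simpa [hsv] using hspec
    have hse : ∀ i, sv i ≤ e i := fun i => Nat.findGreatest_le _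
    have hprime : ∀ i, Prime (p i) := fun i =>
      UniqueFactorizationMonoid.irreducible_iff_prime.mp (hirr i).1
    have hnd : ∀ i j, i ≠ j → ¬ p i ∣ p j := fun i j hij hd =>
      (hirr i).1.not_isUnit (hcop i j hij (p i) dvd_rfl hd)
    obtain ⟨w, hw⟩ := prod_pow_dvd Finset.univ p sv hprime hnd q' fun i _ => hsd i
    have hw0 : w ≠ 0 := by
      rintro rfl
      rw [mul_zero] at hw
      exact hq'0 hw
    by_cases hcase : ∀ i, e i - sv i ≤ kk i
    · have h2 : q'.natDegree = (∑ i, sv i * (p i).natDegree) + w.natDegree := by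
        rw [hw, natDegree_mul (hprod_ne sv) hw0,
          natDegree_prod _ _ (fun i _ => pow_ne_zero _ (hpne i))]
        simp [natDegree_pow]
      have h3 : ∑ i, e i * (p i).natDegree
          ≤ ∑ i, kk i * (p i).natDegree + ∑ i, sv i * (p i).natDegree := by
        rw [← Finset.sum_add_distrib]
        apply Finset.sum_le_sum
        intro i _
        have he : e i ≤ kk i + sv i := by have := hcase i; omega
        calc e i * (p i).natDegree ≤ (kk i + sv i) * (p i).natDegree :=
              Nat.mul_le_mul_right _ he
          _ = kk i * (p i).natDegree + sv i * (p i).natDegree := add_mul _ _ _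
      omega
    · exfalso
      push_neg at hcase
      obtain ⟨i, hi⟩ := hcase
      apply hnr i (e i - sv i) hi
      have hsvi : sv i < e i := by omega
      have hpiw : ¬ p i ∣ w := by
        intro hpw
        have hnot : ¬ p i ^ (sv i + 1) ∣ q' := by
          have hgr := Nat.findGreatest_is_greatest (P := fun s => p i ^ s ∣ q')
            (n := e i) (k := sv i + 1) (by simp only [hsv]; omega) (by omega)
          simpa using hgr
        apply hnot
        obtain ⟨w', hw'⟩ := hpw
        refine ⟨(∏ j ∈ Finset.univ.erase i, p j ^ sv j) * w', ?_⟩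
        rw [hw, ← Finset.mul_prod_erase Finset.univ _ (Finset.mem_univ i), hw']
        ring
      refine ⟨O.ord S', S', rfl, ?_, w,
        C c * ∏ j ∈ Finset.univ.erase i, p j ^ (e j - sv j), q, l, ?_, ?_, ?_, hlcL, ?_⟩
      · rw [← hQS]; exact hQB
      · exact mul_ne_zero (C_ne_zero.mpr hc0)
          (Finset.prod_ne_zero_iff.mpr fun j _ => pow_ne_zero _ (hpne j))
      · intro d hdp hdw
        by_contra hu
        have hd0 : d ≠ 0 := by
          rintro rfl
          exact pow_ne_zero _ (hpne i) (zero_dvd_iff.mp hdp)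
        obtain ⟨π, hπirr, hπd⟩ := WfDvdMonoid.exists_irreducible_factor hu hd0
        have hπp : π ∣ p i :=
          (UniqueFactorizationMonoid.irreducible_iff_prime.mp hπirr).dvd_of_dvd_pow
            (hπd.trans hdp)
        have hassoc : Associated π (p i) := hπirr.associated_of_dvd (hirr i).1 hπp
        exact hpiw (hassoc.symm.dvd.trans (hπd.trans hdw))
      · rw [← hQS]; exact hq
      · rw [← hq'def]
        calc q' * ((C c * ∏ j ∈ Finset.univ.erase i, p j ^ (e j - sv j))
              * p i ^ (e i - sv i))
            = q' * (C c * ∏ j, p j ^ (e j - sv j)) := by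
              rw [mul_assoc, Finset.prod_erase_mul Finset.univ _ (Finset.mem_univ i)]
          _ = ((∏ j, p j ^ sv j) * w) * (C c * ∏ j, p j ^ (e j - sv j)) := by rw [← hw]
          _ = w * (C c * ((∏ j, p j ^ sv j) * ∏ j, p j ^ (e j - sv j))) := by ring
          _ = w * (C c * ∏ j, p j ^ e j) := by
              rw [← Finset.prod_mul_distrib]
              congr 2
              apply Finset.prod_congr rfl
              intro j _
              rw [← pow_add]
              congr 1
              have := hse j
              omega
          _ = w * l := by rw [hl]
end
end

section
/- If T is a desingularized operator for L, then for every i ∈ ℕ the operator ∂^i T is also a desingularized operator for L. -/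
open Polynomial

noncomputable section

namespace OreAlg

variable {R : Type} [CommRing R] [IsDomain R] {A : Type} [Ring A] (O : OreAlg R A)

lemma eq_zero_of_coeff (P : A) (h : ∀ i, O.coeff P i = 0) : P = 0 :=
  O.coeff_inj P 0 (fun i => by rw [h, O.coeff_zero'])

lemma exists_coeff_ne (P : A) (hP : P ≠ 0) : ∃ i, O.coeff P i ≠ 0 := by
  by_contra h
  push_neg at h
  exact hP (O.eq_zero_of_coeff P h)

lemma ord_eq (P : A) (n : ℕ) (hn : O.coeff P n ≠ 0)
    (h : ∀ j, n < j → O.coeff P j = 0) : O.ord P = n := by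
  unfold OreAlg.ord
  apply le_antisymm
  · apply csSup_le ⟨n, hn⟩
    intro j hj
    by_contra hj'
    exact hj (h j (by omega))
  · exact le_csSup ⟨n, fun j hj => by
      by_contra hc
      exact hj (h j (lt_of_not_ge hc))⟩ hn

lemma ord_spec (P : A) (hP : P ≠ 0) :
    O.coeff P (O.ord P) ≠ 0 ∧ ∀ j, O.ord P < j → O.coeff P j = 0 := by
  obtain ⟨N, hN⟩ := O.coeff_bdd P
  have hbdd : BddAbove {i | O.coeff P i ≠ 0} :=
    ⟨N, fun j hj => by
      by_contra hc
      exact hj (hN j (lt_of_not_ge hc))⟩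
  have hne : {i | O.coeff P i ≠ 0}.Nonempty := O.exists_coeff_ne P hP
  constructor
  · exact Nat.sSup_mem hne hbdd
  · intro j hj
    by_contra hc
    exact absurd (le_csSup hbdd (hc : j ∈ {i | O.coeff P i ≠ 0})) (not_le.mpr hj)

lemma reprSum (P : A) (N : ℕ) (hN : ∀ i, N < i → O.coeff P i = 0) :
    P = ∑ i ∈ Finset.range (N + 1), O.ι (O.coeff P i) * O.D ^ i :=
  O.coeff_inj _ _ (fun j => (O.coeff_mk N (O.coeff P) hN j).symm)

lemma desing_step_aux (P : A) (hP : P ≠ 0) (hPB : O.InB P) :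
    O.InB (O.D * P) ∧ O.D * P ≠ 0 ∧ O.ord (O.D * P) = O.ord P + 1 ∧
    ∀ t : Polynomial R, O.lc P = algebraMap (Polynomial R) (QX R) t →
      O.lc (O.D * P) = algebraMap (Polynomial R) (QX R) (O.σ t) := by
  obtain ⟨htop, hhigh⟩ := O.ord_spec P hP
  set n := O.ord P with hn
  choose f hf using hPB
  have halg : Function.Injective (algebraMap (Polynomial R) (QX R)) :=
    IsFractionRing.injective (Polynomial R) (QX R)
  have hf0 : ∀ j, n < j → f j = 0 := by
    intro j hj
    apply halg
    rw [← hf j, hhigh j hj, map_zero]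
  have hδ0 : O.δ 0 = 0 := by
    have h := O.δ_add 0 0
    rw [add_zero] at h
    exact left_eq_add.mp h
  have hrepr : P = ∑ i ∈ Finset.range (n + 1),
      O.ι (algebraMap (Polynomial R) (QX R) (f i)) * O.D ^ i := by
    have h := O.reprSum P n hhigh
    simp_rw [hf] at h
    exact h
  have hexp : O.D * P =
      (∑ i ∈ Finset.range (n + 1),
        O.ι (algebraMap (Polynomial R) (QX R) (O.σ (f i))) * O.D ^ (i + 1))
      + ∑ i ∈ Finset.range (n + 1),
        O.ι (algebraMap (Polynomial R) (QX R) (O.δ (f i))) * O.D ^ i := by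
    conv_lhs => rw [hrepr]
    rw [Finset.mul_sum, ← Finset.sum_add_distrib]
    refine Finset.sum_congr rfl (fun i _ => ?_)
    rw [← mul_assoc, O.comm_rule, add_mul, mul_assoc, ← pow_succ']
  set c1 : ℕ → QX R := fun j =>
    Nat.casesOn j 0 (fun i => algebraMap (Polynomial R) (QX R) (O.σ (f i))) with hc1
  set c2 : ℕ → QX R := fun j => algebraMap (Polynomial R) (QX R) (O.δ (f j)) with hc2
  have hA1 : (∑ j ∈ Finset.range (n + 1 + 1), O.ι (c1 j) * O.D ^ j)
      = ∑ i ∈ Finset.range (n + 1),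
        O.ι (algebraMap (Polynomial R) (QX R) (O.σ (f i))) * O.D ^ (i + 1) := by
    rw [Finset.sum_range_succ']
    simp [hc1]
  have hA2 : (∑ i ∈ Finset.range (n + 1), O.ι (c2 i) * O.D ^ i)
      = ∑ i ∈ Finset.range (n + 1),
        O.ι (algebraMap (Polynomial R) (QX R) (O.δ (f i))) * O.D ^ i := rfl
  have hb1 : ∀ j, n + 1 < j → c1 j = 0 := by
    intro j hj
    match j with
    | (i + 1) => simp [hc1, hf0 i (by omega), map_zero]
  have hb2 : ∀ j, n < j → c2 j = 0 := by
    intro j hj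
    simp [hc2, hf0 j hj, hδ0, map_zero]
  have hco : ∀ j, O.coeff (O.D * P) j = c1 j + c2 j := by
    intro j
    rw [hexp, O.coeff_add, ← hA1, ← hA2, O.coeff_mk (n + 1) c1 hb1 j,
      O.coeff_mk n c2 hb2 j]
  have htopD : O.coeff (O.D * P) (n + 1) = algebraMap (Polynomial R) (QX R) (O.σ (f n)) := by
    rw [hco]
    simp [hc1, hc2, hf0 (n + 1) (by omega), hδ0, map_zero]
  have hfn : f n ≠ 0 := by
    intro h
    apply htop
    rw [hf n, h, map_zero]
  have htopne : O.coeff (O.D * P) (n + 1) ≠ 0 := by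
    rw [htopD]
    intro h
    have h1 : O.σ (f n) = 0 := halg (by rw [h, map_zero])
    exact hfn (O.σ.injective (h1.trans (map_zero O.σ).symm))
  have hhighD : ∀ j, n + 1 < j → O.coeff (O.D * P) j = 0 := by
    intro j hj
    rw [hco, hb1 j hj, hb2 j (by omega), add_zero]
  have hordD : O.ord (O.D * P) = n + 1 := O.ord_eq _ _ htopne hhighD
  have hDPne : O.D * P ≠ 0 := fun h => htopne (by rw [h, O.coeff_zero'])
  have hInB : O.InB (O.D * P) := by
    intro j
    match j with
    | 0 => exact ⟨O.δ (f 0), by rw [hco]; simp [hc1, hc2]⟩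
    | (i + 1) => exact ⟨O.σ (f i) + O.δ (f (i + 1)), by rw [hco]; simp [hc1, hc2, map_add]⟩
  refine ⟨hInB, hDPne, hordD, ?_⟩
  intro t ht
  have hft : f n = t := by
    apply halg
    rw [← hf n, ← ht, hn]
    exact rfl
  show O.coeff (O.D * P) (O.ord (O.D * P)) = algebraMap (Polynomial R) (QX R) (O.σ t)
  rw [hordD, htopD, hft]

end OreAlg

/-- if `T` is a desingularized operator for `L`, then so is `∂^i·T`
for every `i ∈ ℕ`. -/
theorem desing_shift {R : Type} [CommRing R] [IsDomain R]
    [IsPrincipalIdealRing R] {A : Type} [Ring A] (O : OreAlg R A)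
    (L : A) (hL : L ≠ 0) (hLB : O.InB L)
    (r m : ℕ) (c : R) (p : Fin m → Polynomial R) (e : Fin m → ℕ)
    (hF : O.Factored L r m c p e)
    (T : A) (hT : O.Desing L r m c p e T) :
    ∀ i : ℕ, O.Desing L r m c p e (O.D ^ i * T) := by
  intro i
  obtain ⟨hord_L, hrpos, hc0, hlcLf, hirr, hcopr⟩ := hF
  obtain ⟨⟨hTB, Q, hTQ⟩, hrle, a, b, k, t, l, hb, hke, hlcT, hlcL, heq, hnr⟩ := hT
  have hT0 : T ≠ 0 := by
    intro h
    rw [h] at hrle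
    have hset : {i | O.coeff (0 : A) i ≠ 0} = ∅ := by
      ext j
      simp [O.coeff_zero']
    have hz : O.ord (0 : A) = 0 := by
      unfold OreAlg.ord
      rw [hset]
      exact csSup_empty
    omega
  have aux : ∀ i : ℕ, O.InB (O.D ^ i * T) ∧ O.D ^ i * T ≠ 0 ∧
      O.ord (O.D ^ i * T) = O.ord T + i ∧
      O.lc (O.D ^ i * T) = algebraMap (Polynomial R) (QX R) ((⇑O.σ)^[i] t) := by
    intro i
    induction i with
    | zero =>
      exact ⟨by simpa using hTB, by simpa using hT0, by simp,
        by simpa using hlcT⟩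
    | succ i ih =>
      obtain ⟨ih1, ih2, ih3, ih4⟩ := ih
      obtain ⟨s1, s2, s3, s4⟩ := O.desing_step_aux _ ih2 ih1
      have hpow : O.D ^ (i + 1) * T = O.D * (O.D ^ i * T) := by
        rw [pow_succ', mul_assoc]
      refine ⟨?_, ?_, ?_, ?_⟩
      · rw [hpow]; exact s1
      · rw [hpow]; exact s2
      · rw [hpow, s3, ih3]; ring
      · rw [hpow, Function.iterate_succ_apply']
        exact s4 _ ih4
  obtain ⟨hB, hne0, hordi, hlci⟩ := aux i
  refine ⟨⟨hB, O.D ^ i * Q, by rw [hTQ, mul_assoc]⟩, by omega, a, b, k,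
    (⇑O.σ)^[i] t, l, hb, hke, hlci, hlcL, ?_, hnr⟩
  rw [hordi]
  have h1 : O.ord T + i - r = (O.ord T - r) + i := by omega
  rw [h1, Function.iterate_add_apply,
    Function.LeftInverse.iterate O.σ.symm_apply_apply i t]
  exact heq
end
end

section
/- Let p ∈ R[x] be primitive and a divisor of lc_∂(L). If there exists a p-removing operator for L over Q_R[x] of order k, then there exists a p-removing operator for L over R[x] of the same order k. -/
open Polynomial

noncomputable section

/-- `P` is a `p`-removing operator for `L` over `Q_R[x]`, of order `k`: all
coefficients of `P·L` lie in `Q_R[x]` (i.e. have constant denominators in `R`),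
and `σ^{-k}(lc_∂(P·L)) = (w/(v·p))·lc_∂(L)` with `w, v ∈ Q_R[x]` (here cleared
to `R[x]`) sharing no non-constant common factor of `p`. -/
def OreAlg.IsQRemoving {R : Type} [CommRing R] [IsDomain R] {A : Type} [Ring A]
    (O : OreAlg R A) (L : A) (p : Polynomial R) (k : ℕ) (P : A) : Prop :=
  O.ord P = k ∧
  (∀ i : ℕ, ∃ (f : Polynomial R) (b : R), b ≠ 0 ∧
    O.coeff (P * L) i
      = algebraMap (Polynomial R) (QX R) f / algebraMap (Polynomial R) (QX R) (C b)) ∧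
  ∃ (w v t l : Polynomial R) (b : R), v ≠ 0 ∧ b ≠ 0 ∧
    (∀ d : Polynomial R, d ∣ p → d ∣ w → d.natDegree = 0) ∧
    O.lc (P * L)
      = algebraMap (Polynomial R) (QX R) t / algebraMap (Polynomial R) (QX R) (C b) ∧
    O.lc L = algebraMap (Polynomial R) (QX R) l ∧
    (algebraMap (Polynomial R) (QX R) ((⇑O.σ.symm)^[k] t)
        / algebraMap (Polynomial R) (QX R) (C b))
      * algebraMap (Polynomial R) (QX R) (v * p)
      = algebraMap (Polynomial R) (QX R) (w * l)


namespace OreAlg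

variable {R : Type} [CommRing R] [IsDomain R] {A : Type} [Ring A] (O : OreAlg R A)

lemma ord_smul' (f : QX R) (hf : f ≠ 0) (P : A) : O.ord (O.ι f * P) = O.ord P := by
  unfold ord
  congr 1
  ext i
  simp [O.coeff_smul, hf, mul_eq_zero]

lemma lc_smul' (f : QX R) (hf : f ≠ 0) (P : A) : O.lc (O.ι f * P) = f * O.lc P := by
  unfold lc
  rw [O.ord_smul' f hf, O.coeff_smul]

lemma symm_fix (r : R) : O.σ.symm (C r) = C r := by
  conv_lhs => rw [← O.σ_fix r]
  exact O.σ.symm_apply_apply _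

lemma symm_iter_C_mul (n : ℕ) (r : R) (t : Polynomial R) :
    (⇑O.σ.symm)^[n] (C r * t) = C r * (⇑O.σ.symm)^[n] t := by
  induction n generalizing t with
  | zero => simp
  | succ n ih =>
    rw [Function.iterate_succ_apply, Function.iterate_succ_apply, map_mul, O.symm_fix, ih]

end OreAlg

/-- if `p ∈ R[x]` is primitive, divides `lc_∂(L)`, and admits a
`p`-removing operator for `L` over `Q_R[x]` of order `k`, then it admits a
`p`-removing operator for `L` over `R[x]` of the same order `k`. -/
theorem removing_over_R_from_Q {R : Type} [CommRing R] [IsDomain R]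
    [IsPrincipalIdealRing R] {A : Type} [Ring A] (O : OreAlg R A)
    (L : A) (hr : 0 < O.ord L) (hLB : O.InB L)
    (p : Polynomial R) (hp : p.IsPrimitive)
    (hdvd : ∃ l : Polynomial R, O.lc L = algebraMap (Polynomial R) (QX R) l ∧ p ∣ l)
    (k : ℕ) (hQ : ∃ P : A, O.IsQRemoving L p k P) :
    ∃ P : A, O.IsRemoving L p k P := by
  classical
  obtain ⟨P, hordP, hcoeffs, w, v, t, l, b, hv, hb, hcop, hlcPL, hlcL, hrel⟩ := hQ
  obtain ⟨N, hN⟩ := O.coeff_bdd (P * L)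
  choose f g hg hfg using hcoeffs
  set m : R := ∏ i ∈ Finset.range (N + 1), g i with hm
  set B : R := b * m with hB
  have hmne : m ≠ 0 := Finset.prod_ne_zero_iff.mpr fun i _ => hg i
  have hBne : B ≠ 0 := mul_ne_zero hb hmne
  have inj : Function.Injective (algebraMap (Polynomial R) (QX R)) :=
    IsFractionRing.injective _ _
  have hmap : ∀ q : Polynomial R, q ≠ 0 → algebraMap (Polynomial R) (QX R) q ≠ 0 :=
    fun q hq => (map_ne_zero_iff _ inj).mpr hq
  have hCB : (C B : Polynomial R) ≠ 0 := by simpa using hBne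
  have hFB : algebraMap (Polynomial R) (QX R) (C B) ≠ 0 := hmap _ hCB
  set P' : A := O.ι (algebraMap (Polynomial R) (QX R) (C B)) * P with hP'
  have hassoc : P' * L = O.ι (algebraMap (Polynomial R) (QX R) (C B)) * (P * L) :=
    mul_assoc _ _ _
  refine ⟨P', ?_, ?_, ?_⟩
  · rw [hP', O.ord_smul' _ hFB, hordP]
  · intro i
    rw [hassoc]
    rcases le_or_gt i N with hi | hi
    · have hgi : g i ∣ B := hB ▸ Dvd.dvd.mul_left (Finset.dvd_prod_of_mem g
        (Finset.mem_range.mpr (Nat.lt_succ_of_le hi))) b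
      obtain ⟨c, hc⟩ := hgi
      refine ⟨C c * f i, ?_⟩
      rw [O.coeff_smul, hfg i]
      have hgne : algebraMap (Polynomial R) (QX R) (C (g i)) ≠ 0 :=
        hmap _ (by simpa using hg i)
      rw [hc, C_mul, map_mul, map_mul]
      field_simp
    · refine ⟨0, ?_⟩
      rw [O.coeff_smul, hN i hi, map_zero, mul_zero]
  · have hbC : algebraMap (Polynomial R) (QX R) (C b) ≠ 0 := hmap _ (by simpa using hb)
    -- relation over R[x]
    rw [div_mul_eq_mul_div, div_eq_iff hbC] at hrel
    have hrel' : (⇑O.σ.symm)^[k] t * (v * p) = w * l * C b := by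
      apply inj
      simp only [map_mul]
      simp only [map_mul] at hrel
      exact hrel
    -- the new leading coefficient
    have hlc' : O.lc (P' * L) = algebraMap (Polynomial R) (QX R) (C m * t) := by
      rw [hassoc, O.lc_smul' _ hFB, hlcPL, hB, C_mul, map_mul, map_mul]
      field_simp
    refine ⟨C B * w, v, C m * t, l, hv, ?_, hlc', hlcL, ?_⟩
    · -- coprimality
      intro d hdp hdw
      by_contra hdu
      have hpne : p ≠ 0 := hp.ne_zero
      have hdne : d ≠ 0 := fun h => hpne (eq_zero_of_zero_dvd (h ▸ hdp))
      obtain ⟨q, hqirr, hqd⟩ := WfDvdMonoid.exists_irreducible_factor hdu hdne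
      have hqp : q ∣ p := hqd.trans hdp
      have hunit : q.natDegree = 0 → False := by
        intro h0
        have := hp (q.coeff 0) (by rw [← eq_C_of_natDegree_eq_zero h0]; exact hqp)
        exact hqirr.not_isUnit ((eq_C_of_natDegree_eq_zero h0) ▸ isUnit_C.mpr this)
      have hqprime : Prime q := UniqueFactorizationMonoid.irreducible_iff_prime.mp hqirr
      rcases hqprime.2.2 _ _ (hqd.trans hdw) with hq1 | hq2
      · exact hunit (Nat.le_zero.mp ((natDegree_le_of_dvd hq1 hCB).trans_eq
          (natDegree_C B)))
      · exact hunit (hcop q hqp hq2)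
    · rw [O.symm_iter_C_mul, hB, C_mul]
      linear_combination (C m : Polynomial R) * hrel'
end
end

section
/- If the k-th submodule M_k of cont(L) has R[x]-basis {B_1, …, B_ℓ}, then the k-th coefficient ideal I_k = { [∂^k]P : P ∈ M_k } ∪ {0} is generated as an ideal of R[x] by the coefficients [∂^k]B_1, …, [∂^k]B_ℓ. -/
open Polynomial

noncomputable section

namespace OreAlg

variable {R : Type} [CommRing R] [IsDomain R] {A : Type} [Ring A] (O : OreAlg R A)

lemma coeff_sum' {n : ℕ} (f : Fin n → A) (i : ℕ) :
    O.coeff (∑ j, f j) i = ∑ j, O.coeff (f j) i := by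
  classical
  induction (Finset.univ : Finset (Fin n)) using Finset.induction with
  | empty => simpa using O.coeff_zero' i
  | insert _ _ hx ih =>
      rw [Finset.sum_insert hx, Finset.sum_insert hx, O.coeff_add, ih]

lemma ord_le_of' (P : A) (k : ℕ) (h : ∀ i, k < i → O.coeff P i = 0) :
    O.ord P ≤ k := by
  rcases Set.eq_empty_or_nonempty {i | O.coeff P i ≠ 0} with he | hne
  · rw [ord, he, csSup_empty]; exact Nat.zero_le k
  · exact csSup_le hne (fun i hi => by
      by_contra hik
      exact hi (h i (lt_of_not_ge hik)))

lemma coeff_eq_zero' (P : A) (k : ℕ) (h : O.ord P ≤ k) {i : ℕ} (hi : k < i) :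
    O.coeff P i = 0 := by
  by_contra hc
  obtain ⟨N, hN⟩ := O.coeff_bdd P
  have hbdd : BddAbove {j | O.coeff P j ≠ 0} := by
    refine ⟨N, fun j hj => ?_⟩
    by_contra hjN
    exact hj (hN j (lt_of_not_ge hjN))
  have : i ≤ O.ord P := le_csSup hbdd hc
  omega

lemma coeff_combo (k : ℕ) {l : ℕ} (B : Fin l → A) (h b : Fin l → Polynomial R)
    (hb : ∀ i, O.coeff (B i) k = algebraMap (Polynomial R) (QX R) (b i)) :
    O.coeff (∑ i, O.ιp (h i) * B i) k
      = algebraMap (Polynomial R) (QX R) (∑ i, h i * b i) := by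
  rw [O.coeff_sum', map_sum]
  refine Finset.sum_congr rfl fun i _ => ?_
  rw [ιp, O.coeff_smul, hb i, map_mul]

end OreAlg

/-- if `M_k` has an `R[x]`-basis `B₁, …, B_ℓ`, then the `k`-th
coefficient ideal `I_k` is generated by `[∂^k]B₁, …, [∂^k]B_ℓ`. -/
theorem coeff_ideal_generated_by_basis {R : Type} [CommRing R] [IsDomain R]
    [IsPrincipalIdealRing R] {A : Type} [Ring A] (O : OreAlg R A)
    (L : A) (hL : L ≠ 0) (hLB : O.InB L) (hr : 0 < O.ord L)
    (k l : ℕ) (B : Fin l → A)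
    (hBmem : ∀ i, B i ∈ O.M L k)
    (hspan : ∀ P ∈ O.M L k, ∃ h : Fin l → Polynomial R,
      P = ∑ i, O.ιp (h i) * B i)
    (hindep : ∀ h : Fin l → Polynomial R,
      (∑ i, O.ιp (h i) * B i) = 0 → ∀ i, h i = 0)
    (b : Fin l → Polynomial R)
    (hb : ∀ i, O.coeff (B i) k = algebraMap (Polynomial R) (QX R) (b i)) :
    O.Icoeff L k = {f : Polynomial R | ∃ h : Fin l → Polynomial R, f = ∑ i, h i * b i} := by
  have hinj : Function.Injective (algebraMap (Polynomial R) (QX R)) :=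
    IsFractionRing.injective (Polynomial R) (QX R)
  ext f
  constructor
  · rintro ⟨P, hPM, hPf⟩
    obtain ⟨h, hPh⟩ := hspan P hPM
    refine ⟨h, hinj ?_⟩
    rw [← hPf, hPh, O.coeff_combo k B h b hb]
  · rintro ⟨h, rfl⟩
    refine ⟨∑ i, O.ιp (h i) * B i, ⟨⟨?_, ?_⟩, ?_⟩, O.coeff_combo k B h b hb⟩
    · -- InB
      intro i
      choose g hg using fun j => (hBmem j).1.1 i
      refine ⟨∑ j, h j * g j, ?_⟩
      rw [O.coeff_sum', map_sum]
      refine Finset.sum_congr rfl fun j _ => ?_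
      rw [OreAlg.ιp, O.coeff_smul, hg j, map_mul]
    · -- ∃ Q, = Q * L
      choose Q hQ using fun j => (hBmem j).1.2
      refine ⟨∑ j, O.ιp (h j) * Q j, ?_⟩
      rw [Finset.sum_mul]
      refine Finset.sum_congr rfl fun j _ => ?_
      rw [hQ j, mul_assoc]
    · -- ord ≤ k
      refine O.ord_le_of' _ k fun i hi => ?_
      rw [O.coeff_sum']
      refine Finset.sum_eq_zero fun j _ => ?_
      rw [OreAlg.ιp, O.coeff_smul, O.coeff_eq_zero' (B j) k (hBmem j).2 hi, mul_zero]
end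
end

section
/- Let I be a left ideal of R[x][∂] and c a nonzero element of R. Let J be the left ideal of R[x,y][∂] generated by I ∪ {1 − cy}, where y is a new central indeterminate commuting with every element of R[x][∂]. Then I : c^∞ = J ∩ R[x][∂]. -/
open Polynomial

noncomputable section

/-- let `B` play the role of `R[x][∂]` and `B'` the role of
`R[x,y][∂]`, with `y` a central indeterminate: `B' = B[y]` via `j`, with unique
polynomial representation in `y`.  For a central regular constant `c` (a nonzero
element of the domain `R`) and a left ideal `I` of `B`, the saturation
`I : c^∞` equals `J ∩ B`, where `J` is the left ideal of `B'` generated by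
`I ∪ {1 - c·y}`. -/
theorem saturation_via_new_variable {B B' : Type} [Ring B] [Ring B']
    (j : B →+* B') (hj : Function.Injective j)
    (y : B') (hy : ∀ q : B', y * q = q * y)
    (c : B) (hc : ∀ b : B, c * b = b * c)
    (hreg : ∀ b : B, c * b = 0 → b = 0)
    (hgen : ∀ q : B', ∃ (n : ℕ) (b : ℕ → B),
      q = ∑ i ∈ Finset.range (n + 1), j (b i) * y ^ i)
    (huniq : ∀ (n : ℕ) (b : ℕ → B),
      (∑ i ∈ Finset.range (n + 1), j (b i) * y ^ i) = 0 → ∀ i ≤ n, b i = 0)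
    (I : Set B) (hI0 : (0 : B) ∈ I)
    (hIadd : ∀ a b : B, a ∈ I → b ∈ I → a + b ∈ I)
    (hImul : ∀ b a : B, a ∈ I → b * a ∈ I) :
    {P : B | ∃ i : ℕ, c ^ i * P ∈ I}
      = j ⁻¹' {q : B' | ∃ (n : ℕ) (co s : Fin n → B'),
          (∀ i, s i ∈ j '' I ∪ {1 - j c * y}) ∧ q = ∑ i, co i * s i} := by
  have hyc : ∀ (q : B') (k : ℕ), y ^ k * q = q * y ^ k := by
    intro q k
    exact (Commute.pow_left (show Commute y q from hy q) k)
  have hcy : Commute (j c) y := (show Commute y (j c) from hy (j c)).symm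
  have hcb : ∀ b : B, Commute (j c) (j b) := by
    intro b
    show j c * j b = j b * j c
    rw [← map_mul, hc, map_mul]
  ext P
  simp only [Set.mem_setOf_eq, Set.mem_preimage]
  constructor
  · rintro ⟨i, hi⟩
    refine ⟨2, ![y ^ i, j P * ∑ k ∈ Finset.range i, (j c * y) ^ k],
      ![j (c ^ i * P), 1 - j c * y], ?_, ?_⟩
    · intro k
      fin_cases k
      · exact Or.inl ⟨c ^ i * P, hi, rfl⟩
      · exact Or.inr rfl
    · have h1 : (∑ k ∈ Finset.range i, (j c * y) ^ k) * (1 - j c * y)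
          = 1 - (j c * y) ^ i := by
        have hg := geom_sum_mul (j c * y) i
        calc (∑ k ∈ Finset.range i, (j c * y) ^ k) * (1 - j c * y)
            = -((∑ k ∈ Finset.range i, (j c * y) ^ k) * ((j c * y) - 1)) := by
              rw [← mul_neg, neg_sub]
          _ = 1 - (j c * y) ^ i := by rw [hg, neg_sub]
      have h2 : (j c * y) ^ i = (j c) ^ i * y ^ i := hcy.mul_pow i
      rw [Fin.sum_univ_two]
      simp only [Matrix.cons_val_zero, Matrix.cons_val_one, Matrix.head_cons]
      have e1 : y ^ i * j (c ^ i * P) = (j c) ^ i * j P * y ^ i := by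
        rw [map_mul, map_pow, hyc]
      have e2 : (j P * ∑ k ∈ Finset.range i, (j c * y) ^ k) * (1 - j c * y)
          = j P - (j c) ^ i * j P * y ^ i := by
        calc (j P * ∑ k ∈ Finset.range i, (j c * y) ^ k) * (1 - j c * y)
            = j P * ((∑ k ∈ Finset.range i, (j c * y) ^ k) * (1 - j c * y)) := by
              rw [mul_assoc]
          _ = j P * (1 - (j c) ^ i * y ^ i) := by rw [h1, h2]
          _ = j P - j P * (j c) ^ i * y ^ i := by
              rw [mul_sub, mul_one, mul_assoc]
          _ = j P - (j c) ^ i * j P * y ^ i := by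
              rw [← (Commute.pow_left (hcb P) i).eq]
      rw [e1, e2]
      abel
  · rintro ⟨n, co, s, hs, heq⟩
    -- representation predicate
    set Rep : B' → Prop := fun q => ∃ (N : ℕ) (u t : ℕ → B), (∀ k, u k ∈ I) ∧
      q = (∑ k ∈ Finset.range (N + 1), j (u k) * y ^ k)
        + (∑ k ∈ Finset.range (N + 1), j (t k) * y ^ k) * (1 - j c * y) with hRep
    have sum_extend : ∀ (f : ℕ → B) (N M : ℕ), N ≤ M →
        (∑ k ∈ Finset.range (N + 1), j (f k) * y ^ k)
          = ∑ k ∈ Finset.range (M + 1), j (if k ≤ N then f k else 0) * y ^ k := by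
      intro f N M h
      calc (∑ k ∈ Finset.range (N + 1), j (f k) * y ^ k)
          = ∑ k ∈ Finset.range (N + 1), j (if k ≤ N then f k else 0) * y ^ k := by
            refine Finset.sum_congr rfl fun k hk => ?_
            rw [if_pos (by simp only [Finset.mem_range] at hk; omega)]
        _ = ∑ k ∈ Finset.range (M + 1), j (if k ≤ N then f k else 0) * y ^ k := by
            refine Finset.sum_subset (Finset.range_subset_range.mpr (by omega)) ?_
            intro k _ hk
            rw [if_neg (by simp only [Finset.mem_range] at hk; omega), map_zero,
              zero_mul]
    have rep_zero : Rep 0 := by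
      refine ⟨0, 0, 0, fun k => hI0, ?_⟩
      simp
    have rep_add : ∀ q1 q2, Rep q1 → Rep q2 → Rep (q1 + q2) := by
      rintro q1 q2 ⟨N1, u1, t1, hu1, rfl⟩ ⟨N2, u2, t2, hu2, rfl⟩
      refine ⟨max N1 N2,
        fun k => (if k ≤ N1 then u1 k else 0) + (if k ≤ N2 then u2 k else 0),
        fun k => (if k ≤ N1 then t1 k else 0) + (if k ≤ N2 then t2 k else 0),
        ?_, ?_⟩
      · intro k
        apply hIadd
        · split
          · exact hu1 k
          · exact hI0
        · split
          · exact hu2 k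
          · exact hI0
      · rw [sum_extend u1 N1 (max N1 N2) (le_max_left _ _),
          sum_extend u2 N2 (max N1 N2) (le_max_right _ _),
          sum_extend t1 N1 (max N1 N2) (le_max_left _ _),
          sum_extend t2 N2 (max N1 N2) (le_max_right _ _)]
        simp only [map_add, add_mul, Finset.sum_add_distrib]
        abel
    have rep_term : ∀ (q s0 : B'), s0 ∈ j '' I ∪ {1 - j c * y} → Rep (q * s0) := by
      intro q s0 hs0
      obtain ⟨N, b, hb⟩ := hgen q
      rcases hs0 with ⟨a, ha, rfl⟩ | hs0
      · refine ⟨N, fun k => b k * a, 0, fun k => hImul _ _ ha, ?_⟩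
        simp only [Pi.zero_apply, map_zero, zero_mul, Finset.sum_const_zero,
          add_zero]
        rw [hb, Finset.sum_mul]
        refine Finset.sum_congr rfl fun k _ => ?_
        rw [map_mul, mul_assoc, mul_assoc, hyc (j a) k]
      · have hs1 : s0 = 1 - j c * y := hs0
        subst hs1
        refine ⟨N, 0, b, fun k => hI0, ?_⟩
        simp only [Pi.zero_apply, map_zero, zero_mul, Finset.sum_const_zero,
          zero_add]
        rw [hb]
    have repP : Rep (j P) := by
      rw [heq]
      exact Finset.sum_induction _ Rep rep_add rep_zero fun i _ => rep_term _ _ (hs i)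
    obtain ⟨N, u, t, hu, hrep⟩ := repP
    -- expand the representation into a single y-polynomial
    have hexp : j P = (∑ k ∈ Finset.range (N + 1), j (u k + t k) * y ^ k)
        - ∑ k ∈ Finset.range (N + 1), j (c * t k) * y ^ (k + 1) := by
      rw [hrep]
      rw [mul_sub, mul_one, Finset.sum_mul]
      have : ∀ k ∈ Finset.range (N + 1),
          j (t k) * y ^ k * (j c * y) = j (c * t k) * y ^ (k + 1) := by
        intro k _
        calc j (t k) * y ^ k * (j c * y)
            = j (t k) * (y ^ k * j c) * y := by rw [mul_assoc, mul_assoc, mul_assoc]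
          _ = j (t k) * (j c * y ^ k) * y := by rw [hyc (j c) k]
          _ = j (t k) * j c * (y ^ k * y) := by rw [mul_assoc, mul_assoc, mul_assoc]
          _ = j (c * t k) * y ^ (k + 1) := by
              rw [← map_mul, hc, pow_succ]
      rw [Finset.sum_congr rfl this]
      simp only [map_add, add_mul, Finset.sum_add_distrib]
      abel
    -- collect coefficients
    set D : ℕ → B := fun k => (if k ≤ N then u k + t k else 0)
      - (if 1 ≤ k ∧ k ≤ N + 1 then c * t (k - 1) else 0) with hD
    have hDsum : (∑ k ∈ Finset.range (N + 1 + 1), j (D k) * y ^ k) = j P := by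
      have h1 : (∑ k ∈ Finset.range (N + 1 + 1),
          j (if k ≤ N then u k + t k else 0) * y ^ k)
          = ∑ k ∈ Finset.range (N + 1), j (u k + t k) * y ^ k :=
        (sum_extend (fun k => u k + t k) N (N + 1) (by omega)).symm
      have h2 : (∑ k ∈ Finset.range (N + 1 + 1),
          j (if 1 ≤ k ∧ k ≤ N + 1 then c * t (k - 1) else 0) * y ^ k)
          = ∑ k ∈ Finset.range (N + 1), j (c * t k) * y ^ (k + 1) := by
        rw [Finset.sum_range_succ']
        have h0 : j (if 1 ≤ 0 ∧ 0 ≤ N + 1 then c * t (0 - 1) else 0) * y ^ 0 = 0 := by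
          rw [if_neg (by omega), map_zero, zero_mul]
        rw [h0, add_zero]
        refine Finset.sum_congr rfl fun k hk => ?_
        simp only [Finset.mem_range] at hk
        rw [if_pos (by omega)]
        simp
      calc (∑ k ∈ Finset.range (N + 1 + 1), j (D k) * y ^ k)
          = (∑ k ∈ Finset.range (N + 1 + 1),
              j (if k ≤ N then u k + t k else 0) * y ^ k)
            - ∑ k ∈ Finset.range (N + 1 + 1),
              j (if 1 ≤ k ∧ k ≤ N + 1 then c * t (k - 1) else 0) * y ^ k := by
            simp only [hD, map_sub, sub_mul, Finset.sum_sub_distrib]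
        _ = j P := by rw [h1, h2, ← hexp]
    have hbzero : ∀ k ≤ N + 1, D k - (if k = 0 then P else 0) = 0 := by
      apply huniq (N + 1) (fun k => D k - (if k = 0 then P else 0))
      have hPsum : (∑ k ∈ Finset.range (N + 1 + 1),
          j (if k = 0 then P else 0) * y ^ k) = j P := by
        rw [Finset.sum_range_succ']
        have : ∀ k ∈ Finset.range (N + 1),
            j (if k + 1 = 0 then P else 0) * y ^ (k + 1) = 0 := by
          intro k _
          rw [if_neg (by omega), map_zero, zero_mul]
        rw [Finset.sum_congr rfl this]
        simp
      simp only [map_sub, sub_mul, Finset.sum_sub_distrib, hDsum, hPsum, sub_self]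
    have hD0 : P = u 0 + t 0 := by
      have h := hbzero 0 (by omega)
      rw [if_pos rfl] at h
      have h' : D 0 = P := by
        have := sub_eq_zero.mp h
        exact this
      rw [hD] at h'
      simp only [if_pos (Nat.zero_le N), if_neg (by omega : ¬(1 ≤ 0 ∧ 0 ≤ N + 1)),
        sub_zero] at h'
      exact h'.symm
    have hDk : ∀ k, 1 ≤ k → k ≤ N → c * t (k - 1) = u k + t k := by
      intro k h1 h2
      have h := hbzero k (by omega)
      rw [if_neg (by omega), sub_zero] at h
      rw [hD] at h
      simp only [if_pos h2, if_pos (⟨h1, by omega⟩ : 1 ≤ k ∧ k ≤ N + 1)] at h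
      exact (sub_eq_zero.mp h).symm
    have hDtop : c * t N = 0 := by
      have h := hbzero (N + 1) (by omega)
      rw [if_neg (by omega), sub_zero] at h
      rw [hD] at h
      simp only [if_neg (by omega : ¬(N + 1 ≤ N)),
        if_pos (⟨by omega, le_refl _⟩ : 1 ≤ N + 1 ∧ N + 1 ≤ N + 1),
        Nat.add_sub_cancel, zero_sub, neg_eq_zero] at h
      exact h
    have claim : ∀ i, i ≤ N → c ^ (i + 1) * t (N - i) ∈ I := by
      intro i
      induction i with
      | zero =>
        intro _
        simpa [pow_one, hDtop] using hI0
      | succ i ih =>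
        intro hiN
        have hk : N - (i + 1) = (N - i) - 1 := by omega
        have h1 : 1 ≤ N - i := by omega
        have h2 : N - i ≤ N := by omega
        have hrec := hDk (N - i) h1 h2
        have : c ^ (i + 1 + 1) * t (N - (i + 1))
            = c ^ (i + 1) * (c * t ((N - i) - 1)) := by
          rw [hk, pow_succ, mul_assoc]
        rw [this, hrec, mul_add]
        exact hIadd _ _ (hImul _ _ (hu (N - i))) (ih (by omega))
    refine ⟨N + 1, ?_⟩
    have ht0 : c ^ (N + 1) * t 0 ∈ I := by
      have := claim N (le_refl N)
      rwa [Nat.sub_self] at this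
    rw [hD0, mul_add]
    exact hIadd _ _ (hImul _ _ (hu 0)) ht0
end
end
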